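/- Let f : ℝ^d → ℝ be convex with minimizer x*, and let the subgradient iteration be x^{k+1} = x^k - (β_k/‖g(x^k)‖) g(x^k) with g(x^k) ∈ ∂f(x^k) nonzero and β_k > 0. Then for every k ≥ 0, ‖x^{k+1} - x*‖² ≤ ‖x^0 - x*‖² + Σ_{j=0}^{k} β_j². -/

import Mathlib

open scoped InnerProductSpace BigOperators

/-- Boundedness of subgradient iterates for convex `f` with a minimizer. -/
theorem subgrad_iterates_bounded
    (d : ℕ) (f : EuclideanSpace ℝ (Fin d) → ℝ)
    (hconv : ConvexOn ℝ Set.univ f)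
    (x g : ℕ → EuclideanSpace ℝ (Fin d)) (β : ℕ → ℝ)
    (hβ : ∀ k, 0 < β k) (hg : ∀ k, g k ≠ 0)
    (hsub : ∀ k y, f (x k) + ⟪g k, y - x k⟫_ℝ ≤ f y)
    (xstar : EuclideanSpace ℝ (Fin d)) (hmin : ∀ y, f xstar ≤ f y)
    (hupd : ∀ k, x (k + 1) = x k - (β k / ‖g k‖) • g k) :
    ∀ k, ‖x (k + 1) - xstar‖ ^ 2 ≤
      ‖x 0 - xstar‖ ^ 2 + ∑ j ∈ Finset.range (k + 1), (β j) ^ 2 := by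
  have hstep : ∀ k, ‖x (k + 1) - xstar‖ ^ 2 ≤ ‖x k - xstar‖ ^ 2 + (β k) ^ 2 := by
    intro k
    set c : ℝ := β k / ‖g k‖ with hc
    have hgnorm : (0:ℝ) < ‖g k‖ := norm_pos_iff.mpr (hg k)
    have hcpos : 0 < c := div_pos (hβ k) hgnorm
    have hrw : x (k + 1) - xstar = (x k - xstar) - c • g k := by
      rw [hupd k]; abel
    have hinner : 0 ≤ ⟪g k, x k - xstar⟫_ℝ := by
      have h1 := hsub k xstar
      have h2 := hmin (x k)
      have h3 : ⟪g k, xstar - x k⟫_ℝ ≤ 0 := by linarith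
      have h4 : ⟪g k, xstar - x k⟫_ℝ = -⟪g k, x k - xstar⟫_ℝ := by
        rw [← inner_neg_right]; congr 1; abel
      linarith
    have hexp : ‖x (k + 1) - xstar‖ ^ 2
        = ‖x k - xstar‖ ^ 2 - 2 * (c * ⟪g k, x k - xstar⟫_ℝ) + c ^ 2 * ‖g k‖ ^ 2 := by
      rw [hrw, norm_sub_sq_real, real_inner_smul_right, real_inner_comm, norm_smul]
      rw [mul_pow, Real.norm_eq_abs, sq_abs]
    have hcg : c ^ 2 * ‖g k‖ ^ 2 = (β k) ^ 2 := by
      rw [hc, div_pow, div_mul_cancel₀]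
      positivity
    rw [hexp, hcg]
    nlinarith [mul_nonneg hcpos.le hinner]
  intro k
  induction k with
  | zero => simpa using hstep 0
  | succ n ih =>
    calc ‖x (n + 1 + 1) - xstar‖ ^ 2 ≤ ‖x (n + 1) - xstar‖ ^ 2 + (β (n+1)) ^ 2 :=
          hstep (n + 1)
      _ ≤ ‖x 0 - xstar‖ ^ 2 + ∑ j ∈ Finset.range (n + 1), (β j) ^ 2 + (β (n+1)) ^ 2 := by
          linarith
      _ = ‖x 0 - xstar‖ ^ 2 + ∑ j ∈ Finset.range (n + 1 + 1), (β j) ^ 2 := by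
          rw [Finset.sum_range_succ _ (n+1)]; ring
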